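/- arXiv:1410.1627 — 2 statements merged into one kernel-verified Lean document; each statement's English description precedes it below -/
import Mathlib

section
/- Let G be a k×n matrix over GF(2) of rank k with all columns nonzero such that some nonzero vector p₀ ∈ GF(2)^k does not appear among the columns of G. Then the code C generated by G is not subcode-complete: the subcode D = {uG : u ∈ GF(2)^k, u·p₀ = 0} satisfies supp(D) = supp(C) but D ≠ C_{supp(D)}. -/
/-- The fundamental cone of a binary matrix `H` (entries in `GF(2)`),
    viewed via its support: `x ∈ K(H)` iff all coordinates are nonnegative and
    for every row `j` and every `ℓ` in the support of row `j`,
    `x ℓ ≤ ∑_{i ∈ supp(row j), i ≠ ℓ} x i`. -/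
def fundCone {ι κ : Type*} [Fintype ι] [Fintype κ] [DecidableEq κ]
    (H : Matrix ι κ (ZMod 2)) : Set (κ → ℝ) :=
  {x | (∀ i, 0 ≤ x i) ∧
    ∀ j, ∀ ℓ, H j ℓ = 1 →
      x ℓ ≤ ∑ i ∈ Finset.univ.filter (fun i => H j i = 1 ∧ i ≠ ℓ), x i}

/-- Max-fractional weight: (sum of coordinates)/(max coordinate). -/
noncomputable def wMaxfrac {κ : Type*} [Fintype κ] (x : κ → ℝ) : ℝ :=
  (∑ i, x i) / (⨆ i, x i)

/-- AWGNC pseudoweight. -/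
noncomputable def wAWGNC {κ : Type*} [Fintype κ] (x : κ → ℝ) : ℝ :=
  (∑ i, x i) ^ 2 / (∑ i, (x i) ^ 2)

/-- BEC pseudoweight: size of the support. -/
noncomputable def wBEC {κ : Type*} (x : κ → ℝ) : ℕ :=
  Set.ncard {i | x i ≠ 0}

/-- Hamming weight of a vector over GF(2). -/
def hammingWt {κ : Type*} [Fintype κ] (c : κ → ZMod 2) : ℕ :=
  (Finset.univ.filter (fun i => c i ≠ 0)).card


open Matrix

lemma zmod2_eq_one {a : ZMod 2} (h : a ≠ 0) : a = 1 := by revert h; revert a; decide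

lemma exists_dot_one {k : ℕ} (v : Fin k → ZMod 2) (hv : v ≠ 0) :
    ∃ u : Fin k → ZMod 2, u ⬝ᵥ v = 1 := by
  obtain ⟨i, hi⟩ := Function.ne_iff.mp hv
  exact ⟨Pi.single i 1, by rw [single_dotProduct, one_mul]; exact zmod2_eq_one hi⟩

lemma exists_dot_zero_one {k : ℕ} (p v : Fin k → ZMod 2) (hv : v ≠ 0) (hne : v ≠ p) :
    ∃ u : Fin k → ZMod 2, u ⬝ᵥ p = 0 ∧ u ⬝ᵥ v = 1 := by
  obtain ⟨w, hw⟩ := exists_dot_one (p + v) (by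
    intro h
    apply hne
    ext j
    have := congrFun h j
    have key : ∀ a b : ZMod 2, a + b = 0 → b = a := by decide
    exact key _ _ this)
  rw [dotProduct_add] at hw
  obtain ⟨z, hz⟩ := exists_dot_one v hv
  have key2 : ∀ a b : ZMod 2, a + b = 1 → (a = 0 ∧ b = 1) ∨ (a = 1 ∧ b = 0) := by decide
  rcases key2 _ _ hw with ⟨h1, h2⟩ | ⟨h1, h2⟩
  · exact ⟨w, h1, h2⟩
  · by_cases hz0 : z ⬝ᵥ p = 0
    · exact ⟨z, hz0, hz⟩
    · refine ⟨w + z, ?_, ?_⟩ <;> rw [add_dotProduct]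
      · rw [h1, zmod2_eq_one hz0]; decide
      · rw [h2, hz]; decide

lemma vecMul_inj {k n : ℕ} (G : Matrix (Fin k) (Fin n) (ZMod 2)) (hrank : G.rank = k) :
    Function.Injective (fun u : Fin k → ZMod 2 => Matrix.vecMul u G) := by
  have hsurj : Function.Surjective G.mulVecLin := by
    rw [← LinearMap.range_eq_top]
    apply Submodule.eq_top_of_finrank_eq
    rw [← Matrix.rank, hrank, Module.finrank_pi, Fintype.card_fin]
  intro u u' h
  ext j
  obtain ⟨x, hx⟩ := hsurj (Pi.single j 1)
  have h1 : u ⬝ᵥ G.mulVecLin x = u' ⬝ᵥ G.mulVecLin x := by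
    rw [Matrix.mulVecLin_apply, Matrix.dotProduct_mulVec, Matrix.dotProduct_mulVec]; exact congrArg (· ⬝ᵥ x) h
  rw [hx, dotProduct_single, dotProduct_single, mul_one, mul_one] at h1
  exact h1

/-- If some nonzero p₀ does not appear among the columns of G, then the code is
    not subcode-complete: the hyperplane subcode D = {uG : u ⬝ p₀ = 0} has full
    support but differs from the shortened subcode on its support. -/
theorem not_subcodeComplete_of_missing_point {k n : ℕ}
    (G : Matrix (Fin k) (Fin n) (ZMod 2)) (hrank : G.rank = k)
    (hcols : ∀ i : Fin n, (fun j => G j i) ≠ 0)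
    (p₀ : Fin k → ZMod 2) (hp₀ : p₀ ≠ 0)
    (hmiss : ∀ i : Fin n, (fun j => G j i) ≠ p₀) :
    let C : Set (Fin n → ZMod 2) := Set.range (fun u => Matrix.vecMul u G)
    let D : Set (Fin n → ZMod 2) :=
      {c | ∃ u : Fin k → ZMod 2, dotProduct u p₀ = 0 ∧ c = Matrix.vecMul u G}
    ({i | ∃ c ∈ D, c i ≠ 0} = {i | ∃ c ∈ C, c i ≠ 0}) ∧
    D ≠ {c | c ∈ C ∧ ∀ i, c i ≠ 0 → ∃ c' ∈ D, c' i ≠ 0} := by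
  intro C D
  have hD : ∀ i : Fin n, ∃ c ∈ D, c i ≠ 0 := by
    intro i
    obtain ⟨u, hu0, hu1⟩ := exists_dot_zero_one p₀ (fun j => G j i) (hcols i) (hmiss i)
    refine ⟨Matrix.vecMul u G, ⟨u, hu0, rfl⟩, ?_⟩
    show u ⬝ᵥ (fun j => G j i) ≠ 0
    rw [hu1]; decide
  constructor
  · ext i
    simp only [Set.mem_setOf_eq]
    constructor
    · intro _
      obtain ⟨c, ⟨u, _, hcu⟩, hci⟩ := hD i
      exact ⟨c, ⟨u, hcu.symm⟩, hci⟩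
    · intro _
      exact hD i
  · intro heq
    obtain ⟨u₁, hu₁⟩ := exists_dot_one p₀ hp₀
    have hmem : Matrix.vecMul u₁ G ∈ D := by
      rw [heq]
      exact ⟨⟨u₁, rfl⟩, fun i _ => hD i⟩
    obtain ⟨u, hu0, hu⟩ := hmem
    have := vecMul_inj G hrank hu
    rw [← this, hu₁] at hu0
    exact one_ne_zero hu0
end

section
/- Let H be a parity-check matrix of a binary [n,k,d] code C whose minimum max-fractional pseudoweight equals d, and let I' ⊆ {1,…,n}. Let H_{I'} be the submatrix of H consisting of the columns indexed by I'. Then every nonzero x in the fundamental cone K(H_{I'}) satisfies w_maxfrac(x) ≥ d; in particular, if the punctured shortened code C'_{I'} (the restriction of C_{I'} = {c ∈ C : supp(c) ⊆ I'} to the coordinates I') has minimum distance d, then its minimum max-fractional pseudoweight with respect to H_{I'} equals d. -/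
lemma zmod2_cases : ∀ a : ZMod 2, a = 0 ∨ a = 1 := by decide

/-- Extending a vector in `K(H_{I'})` by zeros yields a vector in `K(H)`. -/
lemma ext_mem {m n : ℕ} (H : Matrix (Fin m) (Fin n) (ZMod 2)) (I' : Finset (Fin n))
    (x : {i // i ∈ I'} → ℝ)
    (hx : x ∈ fundCone (H.submatrix id (Subtype.val : {i // i ∈ I'} → Fin n))) :
    (fun i => if h : i ∈ I' then x ⟨i, h⟩ else 0) ∈ fundCone H := by
  obtain ⟨hx0, hx1⟩ := hx
  constructor
  · intro i
    by_cases h : i ∈ I'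
    · simp only [dif_pos h]; exact hx0 _
    · simp [dif_neg h]
  · intro j ℓ hℓ
    by_cases hℓI : ℓ ∈ I'
    · simp only [dif_pos hℓI]
      have key := hx1 j ⟨ℓ, hℓI⟩ (by simpa [Matrix.submatrix] using hℓ)
      refine key.trans ?_
      set A := Finset.univ.filter
        (fun i' : {i // i ∈ I'} => H.submatrix id Subtype.val j i' = 1 ∧ i' ≠ ⟨ℓ, hℓI⟩)
      have h1 : ∑ i' ∈ A, x i'
          = ∑ i ∈ A.image Subtype.val, (if h : i ∈ I' then x ⟨i, h⟩ else 0) := by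
        rw [Finset.sum_image (by intro a _ b _ h; exact Subtype.ext h)]
        refine Finset.sum_congr rfl ?_
        intro a _
        simp [dif_pos a.2]
      rw [h1]
      refine Finset.sum_le_sum_of_subset_of_nonneg ?_ ?_
      · intro i hi
        simp only [Finset.mem_image, A, Finset.mem_filter, Finset.mem_univ, true_and] at hi ⊢
        obtain ⟨a, ⟨ha1, ha2⟩, rfl⟩ := hi
        refine ⟨ha1, ?_⟩
        intro h; exact ha2 (Subtype.ext h)
      · intro i _ _
        by_cases h : i ∈ I'
        · simp only [dif_pos h]; exact hx0 _
        · simp [dif_neg h]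
    · simp only [dif_neg hℓI]
      refine Finset.sum_nonneg ?_
      intro i _
      by_cases h : i ∈ I'
      · simp only [dif_pos h]; exact hx0 _
      · simp [dif_neg h]

/-- Extension by zeros preserves the max-fractional weight. -/
lemma ext_wMaxfrac {n : ℕ} (I' : Finset (Fin n)) [hne : Nonempty {i // i ∈ I'}]
    (x : {i // i ∈ I'} → ℝ) (hx0 : ∀ i, 0 ≤ x i) :
    wMaxfrac (fun i => if h : i ∈ I' then x ⟨i, h⟩ else 0) = wMaxfrac x := by
  have hnn : Nonempty (Fin n) := ⟨hne.some.val⟩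
  have hsum : (∑ i, (if h : i ∈ I' then x ⟨i, h⟩ else 0)) = ∑ i', x i' := by
    rw [← Finset.sum_subset I'.subset_univ (fun i _ hi => dif_neg hi)]
    rw [← Finset.sum_attach I' (fun i => if h : i ∈ I' then x ⟨i, h⟩ else 0)]
    rw [Finset.univ_eq_attach]
    refine Finset.sum_congr rfl ?_
    intro a _
    simp [dif_pos a.2]
  have hsup : (⨆ i, (if h : i ∈ I' then x ⟨i, h⟩ else 0)) = ⨆ i', x i' := by
    have hbd : BddAbove (Set.range x) := (Set.finite_range x).bddAbove
    have hbd2 : BddAbove (Set.range (fun i => if h : i ∈ I' then x ⟨i, h⟩ else 0)) :=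
      (Set.finite_range _).bddAbove
    have hsupnn : 0 ≤ ⨆ i', x i' := le_trans (hx0 hne.some) (le_ciSup hbd hne.some)
    apply le_antisymm
    · refine ciSup_le ?_
      intro i
      by_cases h : i ∈ I'
      · simp only [dif_pos h]; exact le_ciSup hbd _
      · simp only [dif_neg h]; exact hsupnn
    · refine ciSup_le ?_
      intro i'
      have : x i' = (fun i => if h : i ∈ I' then x ⟨i, h⟩ else 0) i'.val := by
        simp [dif_pos i'.2]
      rw [this]
      exact le_ciSup hbd2 _
  unfold wMaxfrac
  rw [hsum, hsup]

/-- The indicator vector of a codeword supported in `I'` lies in `K(H_{I'})`,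
    is nonzero, and its max-fractional weight is its Hamming weight. -/
lemma indicator_stuff {m n : ℕ} (H : Matrix (Fin m) (Fin n) (ZMod 2)) (I' : Finset (Fin n))
    (c : Fin n → ZMod 2) (hc : H.mulVec c = 0) (hc0 : c ≠ 0)
    (hsupp : ∀ i, c i ≠ 0 → i ∈ I') :
    (fun i' : {i // i ∈ I'} => if c i'.val ≠ 0 then (1:ℝ) else 0) ∈
      fundCone (H.submatrix id (Subtype.val : {i // i ∈ I'} → Fin n)) ∧
    (fun i' : {i // i ∈ I'} => if c i'.val ≠ 0 then (1:ℝ) else 0) ≠ 0 ∧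
    wMaxfrac (fun i' : {i // i ∈ I'} => if c i'.val ≠ 0 then (1:ℝ) else 0)
      = (hammingWt c : ℝ) := by
  set x : {i // i ∈ I'} → ℝ := fun i' => if c i'.val ≠ 0 then (1:ℝ) else 0 with hxdef
  obtain ⟨i0, hi0⟩ : ∃ i, c i ≠ 0 := by
    by_contra h; push_neg at h; exact hc0 (funext fun i => h i)
  have hi0I : i0 ∈ I' := hsupp i0 hi0
  have hx0 : ∀ i', 0 ≤ x i' := by intro i'; simp only [hxdef]; split <;> norm_num
  have hx1 : ∀ i', x i' ≤ 1 := by intro i'; simp only [hxdef]; split <;> norm_num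
  refine ⟨⟨hx0, ?_⟩, ?_, ?_⟩
  · -- fundCone condition
    intro j ℓ' hℓ
    simp only [Matrix.submatrix_apply, id] at hℓ
    by_cases hcℓ : c ℓ'.val = 0
    · have : x ℓ' = 0 := by simp [hxdef, hcℓ]
      rw [this]
      exact Finset.sum_nonneg fun i _ => hx0 i
    · have hrow : ∑ i, H j i * c i = 0 := congrFun hc j
      have : ∃ i, i ≠ ℓ'.val ∧ H j i = 1 ∧ c i ≠ 0 := by
        by_contra h
        push_neg at h
        have hz : ∀ i ∈ Finset.univ, i ≠ ℓ'.val → H j i * c i = 0 := by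
          intro i _ hi
          rcases zmod2_cases (H j i) with h1 | h1
          · simp [h1]
          · rcases zmod2_cases (c i) with h2 | h2
            · simp [h2]
            · simp [h1, h i hi h1]
        rw [Finset.sum_eq_single ℓ'.val (fun i _ hi => hz i (Finset.mem_univ i) hi)
          (fun h => absurd (Finset.mem_univ _) h)] at hrow
        rcases zmod2_cases (c ℓ'.val) with h2 | h2
        · exact hcℓ h2
        · simp [hℓ, h2] at hrow
      obtain ⟨i, hine, hHji, hci⟩ := this
      have hiI : i ∈ I' := hsupp i hci
      have hmem : (⟨i, hiI⟩ : {i // i ∈ I'}) ∈ Finset.univ.filter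
          (fun i' : {i // i ∈ I'} => H.submatrix id Subtype.val j i' = 1 ∧ i' ≠ ℓ') := by
        simp only [Finset.mem_filter, Finset.mem_univ, true_and, Matrix.submatrix_apply, id]
        exact Finset.mem_filter.mpr ⟨Finset.mem_univ _, hHji, fun h => hine (congrArg Subtype.val h)⟩
      calc x ℓ' ≤ 1 := hx1 ℓ'
        _ = x ⟨i, hiI⟩ := by simp [hxdef, hci]
        _ ≤ _ := Finset.single_le_sum (fun i' _ => hx0 i') hmem
  · -- nonzero
    intro h
    have := congrFun h ⟨i0, hi0I⟩
    simp [hxdef, hi0] at this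
  · -- weight
    have hcard : (Finset.univ.filter (fun i' : {i // i ∈ I'} => c i'.val ≠ 0)).card
        = hammingWt c := by
      unfold hammingWt
      refine Finset.card_bij (fun i' _ => i'.val) ?_ ?_ ?_
      · intro a ha
        simp only [Finset.mem_filter, Finset.mem_univ, true_and] at ha ⊢
        exact ha
      · intro a _ b _ h; exact Subtype.ext h
      · intro b hb
        simp only [Finset.mem_filter, Finset.mem_univ, true_and] at hb
        exact ⟨⟨b, hsupp b hb⟩, by simpa using hb, rfl⟩
    have hsum : ∑ i', x i' = (hammingWt c : ℝ) := by
      rw [← hcard]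
      exact Finset.sum_boole (R := ℝ) _ _
    have hsup : (⨆ i', x i') = 1 := by
      have : Nonempty {i // i ∈ I'} := ⟨⟨i0, hi0I⟩⟩
      apply le_antisymm
      · exact ciSup_le hx1
      · have : x ⟨i0, hi0I⟩ = 1 := by simp [hxdef, hi0]
        rw [← this]
        exact le_ciSup (Set.finite_range x).bddAbove _
    unfold wMaxfrac
    rw [hsum, hsup, div_one]

/-- If the minimum max-fractional pseudoweight of H equals the minimum distance d
    of its code, then every nonzero x in the fundamental cone of the column
    submatrix H_{I'} has max-fractional weight at least d; in particular, if the
    punctured shortened code has minimum distance d, the minimum max-fractional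
    pseudoweight of H_{I'} equals d. -/
theorem shortened_submatrix_pseudoweight {m n : ℕ} (d : ℕ)
    (H : Matrix (Fin m) (Fin n) (ZMod 2)) (I' : Finset (Fin n))
    (hd_min : ∀ c : Fin n → ZMod 2, H.mulVec c = 0 → c ≠ 0 → d ≤ hammingWt c)
    (hd_ex : ∃ c : Fin n → ZMod 2, H.mulVec c = 0 ∧ c ≠ 0 ∧ hammingWt c = d)
    (hpw_min : ∀ x ∈ fundCone H, x ≠ 0 → (d : ℝ) ≤ wMaxfrac x)
    (hpw_ex : ∃ x ∈ fundCone H, x ≠ 0 ∧ wMaxfrac x = (d : ℝ)) :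
    (∀ x ∈ fundCone (H.submatrix id (Subtype.val : {i // i ∈ I'} → Fin n)),
        x ≠ 0 → (d : ℝ) ≤ wMaxfrac x) ∧
    ((∃ c : Fin n → ZMod 2, H.mulVec c = 0 ∧ c ≠ 0 ∧
        (∀ i, c i ≠ 0 → i ∈ I') ∧ hammingWt c = d) →
      ∃ x ∈ fundCone (H.submatrix id (Subtype.val : {i // i ∈ I'} → Fin n)),
        x ≠ 0 ∧ wMaxfrac x = (d : ℝ)) := by
  constructor
  · intro x hx hxne
    rcases isEmpty_or_nonempty {i // i ∈ I'} with he | hne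
    · exact absurd (funext fun i => (he.false i).elim) hxne
    · obtain ⟨i', hxi'⟩ : ∃ i', x i' ≠ 0 := by
        by_contra h; push_neg at h; exact hxne (funext fun i => h i)
      have hextmem := ext_mem H I' x hx
      have hextne : (fun i => if h : i ∈ I' then x ⟨i, h⟩ else 0) ≠ 0 := by
        intro h
        have := congrFun h i'.val
        simp only [dif_pos i'.2, Pi.zero_apply] at this
        exact hxi' (by simpa using this)
      have := hpw_min _ hextmem hextne
      rwa [ext_wMaxfrac I' x hx.1] at this
  · rintro ⟨c, hc, hc0, hsupp, hwt⟩
    obtain ⟨hmem, hne, hw⟩ := indicator_stuff H I' c hc hc0 hsupp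
    exact ⟨_, hmem, hne, by rw [hw, hwt]⟩
end
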